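/- Let G be a graph whose non-edges are partitioned into fillable and non-fillable, such that the graph on V(G) spanned by the fillable non-edges contains no 4-cycle subgraph. Let G' be obtained from G by adding, for each edge uv of G, a new vertex w_{uv} adjacent exactly to u and v (new non-edges being non-fillable). If F is a set of fillable non-edges such that G' + F contains no induced house, then G + F contains no induced C4. -/

import Mathlib

/-- The cycle on 4 vertices. -/
def C4 : SimpleGraph (Fin 4) :=
  SimpleGraph.fromEdgeSet {s(0,1), s(1,2), s(2,3), s(3,0)}

/-- The house graph: a 4-cycle with a fifth vertex adjacent to two adjacent
cycle vertices (the complement of `P5`). -/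
def house : SimpleGraph (Fin 5) :=
  SimpleGraph.fromEdgeSet {s(0,1), s(1,2), s(2,3), s(3,0), s(0,4), s(1,4)}

/-- The graph `G'` obtained from `G` by adding, for each edge `uv` of `G`, a new
vertex `w_{uv}` adjacent exactly to `u` and `v`; the new vertices are pairwise
distinct and non-adjacent. -/
def edgeWitnessGraph {V : Type*} (G : SimpleGraph V) :
    SimpleGraph (V ⊕ {p : V × V // G.Adj p.1 p.2}) :=
  SimpleGraph.fromRel (fun x y =>
    match x, y with
    | Sum.inl a, Sum.inl b => G.Adj a b
    | Sum.inl a, Sum.inr e => a = e.1.1 ∨ a = e.1.2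
    | _, _ => False)

section Aux

variable {V : Type*} (G : SimpleGraph V) (F : Set (Sym2 V))

lemma mem_map_inl_iff (x y : V) :
    s(Sum.inl x, Sum.inl y) ∈ (Sym2.map (Sum.inl : V → V ⊕ {p : V × V // G.Adj p.1 p.2}) '' F)
      ↔ s(x, y) ∈ F := by
  constructor
  · rintro ⟨z, hz, heq⟩
    have : z = s(x, y) := Sym2.map.injective Sum.inl_injective (by simpa using heq)
    rwa [this] at hz
  · intro h
    exact ⟨s(x, y), h, by simp⟩

lemma adj_inl_inl (x y : V) :
    (edgeWitnessGraph G ⊔ SimpleGraph.fromEdgeSet (Sym2.map Sum.inl '' F)).Adj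
      (Sum.inl x) (Sum.inl y) ↔ (G ⊔ SimpleGraph.fromEdgeSet F).Adj x y := by
  simp only [SimpleGraph.sup_adj, edgeWitnessGraph, SimpleGraph.fromRel_adj,
    SimpleGraph.fromEdgeSet_adj, mem_map_inl_iff, ne_eq, Sum.inl.injEq]
  constructor
  · rintro (⟨hne, h | h⟩ | ⟨h, hne⟩)
    · exact Or.inl h
    · exact Or.inl h.symm
    · exact Or.inr ⟨h, hne⟩
  · rintro (h | ⟨h, hne⟩)
    · exact Or.inl ⟨h.ne, Or.inl h⟩
    · exact Or.inr ⟨h, hne⟩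

lemma adj_inl_inr (x : V) (e : {p : V × V // G.Adj p.1 p.2}) :
    (edgeWitnessGraph G ⊔ SimpleGraph.fromEdgeSet (Sym2.map Sum.inl '' F)).Adj
      (Sum.inl x) (Sum.inr e) ↔ (x = e.1.1 ∨ x = e.1.2) := by
  simp only [SimpleGraph.sup_adj, edgeWitnessGraph, SimpleGraph.fromRel_adj,
    SimpleGraph.fromEdgeSet_adj]
  constructor
  · rintro (⟨_, h | h⟩ | ⟨h, _⟩)
    · exact h
    · exact h.elim
    · exfalso
      obtain ⟨z, _, heq⟩ := h
      have := Sym2.mem_map.mp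
        (heq ▸ (Sym2.mem_mk_right _ (Sum.inr e) : Sum.inr e ∈ s(Sum.inl x, Sum.inr e)))
      obtain ⟨w, _, hw⟩ := this
      exact Sum.inl_ne_inr hw
  · intro h
    exact Or.inl ⟨Sum.inl_ne_inr, Or.inl h⟩

lemma adj_inr_inl (x : V) (e : {p : V × V // G.Adj p.1 p.2}) :
    (edgeWitnessGraph G ⊔ SimpleGraph.fromEdgeSet (Sym2.map Sum.inl '' F)).Adj
      (Sum.inr e) (Sum.inl x) ↔ (x = e.1.1 ∨ x = e.1.2) := by
  rw [SimpleGraph.adj_comm]; exact adj_inl_inr G F x e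

lemma not_adj_inr_inr (e e' : {p : V × V // G.Adj p.1 p.2}) :
    ¬ (edgeWitnessGraph G ⊔ SimpleGraph.fromEdgeSet (Sym2.map Sum.inl '' F)).Adj
      (Sum.inr e) (Sum.inr e') := by
  simp only [SimpleGraph.sup_adj, edgeWitnessGraph, SimpleGraph.fromRel_adj,
    SimpleGraph.fromEdgeSet_adj]
  rintro (⟨_, h | h⟩ | ⟨h, _⟩)
  · exact h
  · exact h
  · obtain ⟨z, _, heq⟩ := h
    have := Sym2.mem_map.mp
      (heq ▸ (Sym2.mem_mk_right _ (Sum.inr e') : Sum.inr e' ∈ s(Sum.inr e, Sum.inr e')))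
    obtain ⟨w, _, hw⟩ := this
    exact Sum.inl_ne_inr hw

set_option maxHeartbeats 1000000 in
/-- Given an induced 4-cycle `a b c d` in `G + F` whose edge `ab` lies in `G`,
we get an induced house in `G' + F`. -/
def house_of_cycle {V : Type*} (G : SimpleGraph V) (F : Set (Sym2 V)) (a b c d : V)
    (hac : a ≠ c) (had : a ≠ d) (hbc : b ≠ c) (hbd : b ≠ d) (hcd : c ≠ d)
    (hab : G.Adj a b)
    (e12 : (G ⊔ SimpleGraph.fromEdgeSet F).Adj b c)
    (e23 : (G ⊔ SimpleGraph.fromEdgeSet F).Adj c d)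
    (e30 : (G ⊔ SimpleGraph.fromEdgeSet F).Adj d a)
    (n02 : ¬ (G ⊔ SimpleGraph.fromEdgeSet F).Adj a c)
    (n13 : ¬ (G ⊔ SimpleGraph.fromEdgeSet F).Adj b d) :
    house ↪g (edgeWitnessGraph G ⊔ SimpleGraph.fromEdgeSet (Sym2.map Sum.inl '' F)) := by
  have e01 : (G ⊔ SimpleGraph.fromEdgeSet F).Adj a b := by simp [hab]
  have nab : a ≠ b := hab.ne
  have nba := nab.symm
  have hca := hac.symm
  have hda := had.symm
  have hcb := hbc.symm
  have hdb := hbd.symm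
  have hdc := hcd.symm
  have n20 : ¬ (G ⊔ SimpleGraph.fromEdgeSet F).Adj c a := fun h => n02 h.symm
  have n31 : ¬ (G ⊔ SimpleGraph.fromEdgeSet F).Adj d b := fun h => n13 h.symm
  have e10 := e01.symm
  have e21 := e12.symm
  have e32 := e23.symm
  have e03 := e30.symm
  have H01 : house.Adj 0 1 := by simp [house]
  have N02 : ¬ house.Adj 0 2 := by simp [house]
  have H03 : house.Adj 0 3 := by simp [house]
  have H04 : house.Adj 0 4 := by simp [house]
  have H10 : house.Adj 1 0 := by simp [house]
  have H12 : house.Adj 1 2 := by simp [house]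
  have N13 : ¬ house.Adj 1 3 := by simp [house]
  have H14 : house.Adj 1 4 := by simp [house]
  have N20 : ¬ house.Adj 2 0 := by simp [house]
  have H21 : house.Adj 2 1 := by simp [house]
  have H23 : house.Adj 2 3 := by simp [house]
  have N24 : ¬ house.Adj 2 4 := by simp [house]
  have H30 : house.Adj 3 0 := by simp [house]
  have N31 : ¬ house.Adj 3 1 := by simp [house]
  have H32 : house.Adj 3 2 := by simp [house]
  have N34 : ¬ house.Adj 3 4 := by simp [house]
  have H40 : house.Adj 4 0 := by simp [house]
  have H41 : house.Adj 4 1 := by simp [house]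
  have N42 : ¬ house.Adj 4 2 := by simp [house]
  have N43 : ¬ house.Adj 4 3 := by simp [house]
  refine ⟨⟨![Sum.inl a, Sum.inl b, Sum.inl c, Sum.inl d, Sum.inr ⟨(a, b), hab⟩], ?_⟩, ?_⟩
  · intro x y hxy
    fin_cases x <;> fin_cases y <;> simp_all
  · intro x y
    change (edgeWitnessGraph G ⊔ SimpleGraph.fromEdgeSet (Sym2.map Sum.inl '' F)).Adj (![Sum.inl a, Sum.inl b, Sum.inl c, Sum.inl d, Sum.inr ⟨(a, b), hab⟩] x) (![Sum.inl a, Sum.inl b, Sum.inl c, Sum.inl d, Sum.inr ⟨(a, b), hab⟩] y) ↔ house.Adj x y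
    fin_cases x <;> fin_cases y <;>
      simp [adj_inl_inl, adj_inl_inr, adj_inr_inl, not_adj_inr_inr G F,
        -SimpleGraph.sup_adj, -SimpleGraph.fromEdgeSet_adj,
        H01, H03, H04, H10, H12, H14, H21, H23, H30, H32, H40, H41, N02, N13, N20, N24, N31, N34, N42, N43,
        e01, e12, e23, e30, e10, e21, e32, e03, n02, n13, n20, n31,
        nab, nba, hac, hca, had, hda, hbc, hcb, hbd, hdb, hcd, hdc,
        (G ⊔ SimpleGraph.fromEdgeSet F).irrefl]

end Aux

/-- Suppose the non-edges of `G` are partitioned into fillable ones (`Fill`) and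
non-fillable ones, and the graph spanned by the fillable non-edges contains no
4-cycle subgraph. If `F` is a set of fillable non-edges such that `G' + F`
contains no induced house, then `G + F` contains no induced `C4`. -/
theorem house_free_gives_C4_free {V : Type*} (G : SimpleGraph V)
    (Fill : Set (Sym2 V)) (hFill : Fill ⊆ Gᶜ.edgeSet)
    (hno4 : ∀ a b c d : V, a ≠ b → a ≠ c → a ≠ d → b ≠ c → b ≠ d → c ≠ d →
      ¬((SimpleGraph.fromEdgeSet Fill).Adj a b ∧ (SimpleGraph.fromEdgeSet Fill).Adj b c ∧
        (SimpleGraph.fromEdgeSet Fill).Adj c d ∧ (SimpleGraph.fromEdgeSet Fill).Adj d a))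
    (F : Set (Sym2 V)) (hF : F ⊆ Fill)
    (hfree : IsEmpty (house ↪g
      (edgeWitnessGraph G ⊔ SimpleGraph.fromEdgeSet (Sym2.map Sum.inl '' F)))) :
    IsEmpty (C4 ↪g (G ⊔ SimpleGraph.fromEdgeSet F)) := by
  constructor
  intro f
  set a := f 0 with ha
  set b := f 1 with hb
  set c := f 2 with hc
  set d := f 3 with hd
  have hinj := f.injective
  have nab : a ≠ b := fun h => by simpa using hinj h
  have nac : a ≠ c := fun h => by simpa using hinj h
  have nad : a ≠ d := fun h => by simpa using hinj h
  have nbc : b ≠ c := fun h => by simpa using hinj h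
  have nbd : b ≠ d := fun h => by simpa using hinj h
  have ncd : c ≠ d := fun h => by simpa using hinj h
  have e01 : (G ⊔ SimpleGraph.fromEdgeSet F).Adj a b := (SimpleGraph.Embedding.map_adj_iff f).mpr (by simp [C4])
  have e12 : (G ⊔ SimpleGraph.fromEdgeSet F).Adj b c := (SimpleGraph.Embedding.map_adj_iff f).mpr (by simp [C4])
  have e23 : (G ⊔ SimpleGraph.fromEdgeSet F).Adj c d := (SimpleGraph.Embedding.map_adj_iff f).mpr (by simp [C4])
  have e30 : (G ⊔ SimpleGraph.fromEdgeSet F).Adj d a := (SimpleGraph.Embedding.map_adj_iff f).mpr (by simp [C4])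
  have n02 : ¬ (G ⊔ SimpleGraph.fromEdgeSet F).Adj a c := fun h => by
    have := (SimpleGraph.Embedding.map_adj_iff f).mp h; simp [C4] at this
  have n13 : ¬ (G ⊔ SimpleGraph.fromEdgeSet F).Adj b d := fun h => by
    have := (SimpleGraph.Embedding.map_adj_iff f).mp h; simp [C4] at this
  by_cases h1 : G.Adj a b
  · exact hfree.false (house_of_cycle G F a b c d nac nad nbc nbd ncd h1 e12 e23 e30 n02 n13)
  by_cases h2 : G.Adj b c
  · exact hfree.false (house_of_cycle G F b c d a nbd nab.symm ncd nac.symm nad.symm h2 e23 e30 e01 n13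
      (fun h => n02 h.symm))
  by_cases h3 : G.Adj c d
  · exact hfree.false (house_of_cycle G F c d a b nac.symm nbc.symm nad.symm nbd.symm nab h3 e30 e01 e12
      (fun h => n02 h.symm) (fun h => n13 h.symm))
  by_cases h4 : G.Adj d a
  · exact hfree.false (house_of_cycle G F d a b c nbd.symm ncd.symm nab nac nbc h4 e01 e12 e23
      (fun h => n13 h.symm) n02)
  -- all four cycle edges lie in F, contradicting `hno4`
  have f01 : s(a, b) ∈ F := ((SimpleGraph.fromEdgeSet_adj _).mp (e01.resolve_left h1)).1
  have f12 : s(b, c) ∈ F := ((SimpleGraph.fromEdgeSet_adj _).mp (e12.resolve_left h2)).1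
  have f23 : s(c, d) ∈ F := ((SimpleGraph.fromEdgeSet_adj _).mp (e23.resolve_left h3)).1
  have f30 : s(d, a) ∈ F := ((SimpleGraph.fromEdgeSet_adj _).mp (e30.resolve_left h4)).1
  exact hno4 a b c d nab nac nad nbc nbd ncd
    ⟨⟨hF f01, nab⟩, ⟨hF f12, nbc⟩, ⟨hF f23, ncd⟩, ⟨hF f30, nad.symm⟩⟩
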